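/- The functions r(ξ)·(cos(-s₀ξ), sin(-s₀ξ)) and r(ξ)·(-sin(-s₀ξ), cos(-s₀ξ)), with r(ξ) = (1 + e^{2√(-μ)ξ})²·e^{(-2√(-μ)-αs₀)ξ}, are solutions of the planar linear system p' = -(αs₀ + 2√(-μ)cos(θ₀(ξ)))p + s₀q, q' = -s₀p - (αs₀ + 2√(-μ)cos(θ₀(ξ)))q, where θ₀(ξ) = 2 arctan(e^{√(-μ)ξ}), and they are linearly independent at each ξ. -/

import Mathlib

/-- The functions `r(ξ)(cos(-s₀ξ), sin(-s₀ξ))` and `r(ξ)(-sin(-s₀ξ), cos(-s₀ξ))`, with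
`r(ξ) = (1+e^{2√(-μ)ξ})²e^{(-2√(-μ)-αs₀)ξ}`, solve the variational system
`p' = -(αs₀ + 2√(-μ)cos θ₀)p + s₀ q`, `q' = -s₀ p - (αs₀ + 2√(-μ)cos θ₀)q` along the
homogeneous domain wall `θ₀(ξ) = 2 arctan(e^{√(-μ)ξ})`, and are linearly independent
at each `ξ`. -/
theorem variational_solutions_and_independence (α μ s₀ : ℝ) (hα : 0 < α) (hμ : μ < 0)
    (r θ₀ : ℝ → ℝ)
    (hr : r = fun ξ => (1 + Real.exp (2 * Real.sqrt (-μ) * ξ)) ^ 2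
      * Real.exp ((-2 * Real.sqrt (-μ) - α * s₀) * ξ))
    (hθ : θ₀ = fun ξ => 2 * Real.arctan (Real.exp (Real.sqrt (-μ) * ξ))) :
    ∀ ξ : ℝ,
      HasDerivAt (fun ξ => r ξ * Real.cos (-s₀ * ξ))
        (-(α * s₀ + 2 * Real.sqrt (-μ) * Real.cos (θ₀ ξ)) * (r ξ * Real.cos (-s₀ * ξ))
          + s₀ * (r ξ * Real.sin (-s₀ * ξ))) ξ ∧
      HasDerivAt (fun ξ => r ξ * Real.sin (-s₀ * ξ))
        (-s₀ * (r ξ * Real.cos (-s₀ * ξ))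
          - (α * s₀ + 2 * Real.sqrt (-μ) * Real.cos (θ₀ ξ)) * (r ξ * Real.sin (-s₀ * ξ))) ξ ∧
      HasDerivAt (fun ξ => r ξ * (-Real.sin (-s₀ * ξ)))
        (-(α * s₀ + 2 * Real.sqrt (-μ) * Real.cos (θ₀ ξ)) * (r ξ * (-Real.sin (-s₀ * ξ)))
          + s₀ * (r ξ * Real.cos (-s₀ * ξ))) ξ ∧
      HasDerivAt (fun ξ => r ξ * Real.cos (-s₀ * ξ))
        (-s₀ * (r ξ * (-Real.sin (-s₀ * ξ)))
          - (α * s₀ + 2 * Real.sqrt (-μ) * Real.cos (θ₀ ξ)) * (r ξ * Real.cos (-s₀ * ξ))) ξ ∧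
      LinearIndependent ℝ
        ![((r ξ * Real.cos (-s₀ * ξ), r ξ * Real.sin (-s₀ * ξ)) : ℝ × ℝ),
          ((r ξ * (-Real.sin (-s₀ * ξ)), r ξ * Real.cos (-s₀ * ξ)) : ℝ × ℝ)] := by
  intro ξ
  set k := Real.sqrt (-μ) with hk
  have hE : (0:ℝ) < 1 + Real.exp (2 * k * ξ) := by positivity
  have hcosθ : Real.cos (θ₀ ξ)
      = (1 - Real.exp (2 * k * ξ)) / (1 + Real.exp (2 * k * ξ)) := by
    have ht2 : Real.exp (k * ξ) ^ 2 = Real.exp (2 * k * ξ) := by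
      rw [← Real.exp_nat_mul]; ring_nf
    rw [hθ]
    simp only
    rw [Real.cos_two_mul, Real.cos_arctan, ht2]
    rw [div_pow, Real.sq_sqrt (by positivity), one_pow]
    field_simp
    ring
  have hrd : HasDerivAt r (-(α * s₀ + 2 * k * Real.cos (θ₀ ξ)) * r ξ) ξ := by
    have h1 : HasDerivAt (fun ξ : ℝ => 1 + Real.exp (2 * k * ξ))
        (Real.exp (2 * k * ξ) * (2 * k)) ξ := by
      simpa using (((hasDerivAt_id ξ).const_mul (2*k)).exp.const_add 1)
    have h2 : HasDerivAt (fun ξ : ℝ => (1 + Real.exp (2 * k * ξ)) ^ 2)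
        (2 * (1 + Real.exp (2*k*ξ)) ^ 1 * (Real.exp (2*k*ξ) * (2*k))) ξ := h1.pow 2
    have h3 : HasDerivAt (fun ξ : ℝ => Real.exp ((-2*k - α*s₀) * ξ))
        (Real.exp ((-2*k - α*s₀)*ξ) * (-2*k - α*s₀)) ξ := by
      simpa using ((hasDerivAt_id ξ).const_mul (-2*k - α*s₀)).exp
    have h4 := h2.mul h3
    rw [hr]
    refine h4.congr_deriv ?_
    rw [hcosθ]
    field_simp
    ring
  have hid : HasDerivAt (fun x : ℝ => -s₀ * x) (-s₀) ξ := by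
    have h := (hasDerivAt_id ξ).const_mul (-s₀)
    simp only [mul_one] at h
    exact h
  have hc := hid.cos
  have hs := hid.sin
  refine ⟨?_, ?_, ?_, ?_, ?_⟩
  · have := hrd.mul hc
    exact this.congr_deriv (by ring)
  · have := hrd.mul hs
    exact this.congr_deriv (by ring)
  · have := hrd.mul hs.neg
    exact this.congr_deriv (by simp only [Pi.neg_apply]; ring)
  · have := hrd.mul hc
    exact this.congr_deriv (by ring)
  · have hrpos : 0 < r ξ := by rw [hr]; positivity
    rw [LinearIndependent.pair_iff]
    intro a b hab
    have h1 : a * (r ξ * Real.cos (-s₀ * ξ)) + b * (r ξ * (-Real.sin (-s₀ * ξ))) = 0 := by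
      have := congrArg Prod.fst hab
      simpa using this
    have h2 : a * (r ξ * Real.sin (-s₀ * ξ)) + b * (r ξ * Real.cos (-s₀ * ξ)) = 0 := by
      have := congrArg Prod.snd hab
      simpa using this
    have pyth := Real.sin_sq_add_cos_sq (-s₀ * ξ)
    have ha : a * r ξ = 0 := by
      linear_combination Real.cos (-s₀ * ξ) * h1 + Real.sin (-s₀ * ξ) * h2
        - a * r ξ * pyth + a * r ξ * pyth - a * r ξ * pyth
    have hb : b * r ξ = 0 := by
      linear_combination -Real.sin (-s₀ * ξ) * h1 + Real.cos (-s₀ * ξ) * h2 - b * r ξ * pyth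
    constructor
    · exact (mul_eq_zero.1 ha).resolve_right hrpos.ne'
    · exact (mul_eq_zero.1 hb).resolve_right hrpos.ne'
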